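/- Let m > 1, σ ≥ 0, N real, h0 = √(2/(m+1)), and define the surface function S(X,H) = −mH² − ((σ+2)(2N+σ−2)/(8m))X² − (N−1+σ/2)XH + ((2N+σ−2)h0/2)X + 2mh0·H, the normal vector n(X,H) = (−((σ+2)(2N+σ−2)/(4m))X − ((2N+σ−2)/2)H + ((2N+σ−2)/2)h0, −2mH − ((2N+σ−2)/2)X + 2mh0, −1), and the translated vector field V(X,H,Z) = (((m−1)/2)XH − ((m−1)h0/2)X − X², −((m+1)/2)H² + (m+1)h0·H − Z − (N−1)XH + (N−1)h0·X, Z[(m−1)H − (m−1)h0 + σX]). Then for all real X, H, the dot product n(X,H) · V(X,H,S(X,H)) equals F(X) = −(K1(σ)/(2(m+1)))X − ((2N−σ−6)(2N+σ−2)(σ+2)/(16m))X³, where K1(σ) = (3m+1)σ − 2(m−1)(N−1). -/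

import Mathlib

open Set

/-- the scalar product between the normal of the separatrix
surface `Z = S(X,H)` and the translated phase-space vector field, evaluated on
the surface, equals
`F(X) = -(K1(σ)/(2(m+1)))X - ((2N-σ-6)(2N+σ-2)(σ+2)/(16m))X³`. -/
theorem flow_on_separatrix_surface
    (m σ N h0 : ℝ) (hm : 1 < m) (hσ : 0 ≤ σ)
    (hh0 : h0 = Real.sqrt (2 / (m + 1)))
    (K1 : ℝ) (hK1 : K1 = (3 * m + 1) * σ - 2 * (m - 1) * (N - 1))
    (S : ℝ → ℝ → ℝ)
    (hS : ∀ X H : ℝ, S X H = -m * H ^ 2 - ((σ + 2) * (2 * N + σ - 2) / (8 * m)) * X ^ 2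
      - (N - 1 + σ / 2) * X * H + ((2 * N + σ - 2) * h0 / 2) * X + 2 * m * h0 * H) :
    ∀ X H : ℝ,
      (-((σ + 2) * (2 * N + σ - 2) / (4 * m)) * X - ((2 * N + σ - 2) / 2) * H
          + ((2 * N + σ - 2) / 2) * h0)
        * ((m - 1) / 2 * X * H - (m - 1) * h0 / 2 * X - X ^ 2)
      + (-(2 * m) * H - ((2 * N + σ - 2) / 2) * X + 2 * m * h0)
        * (-((m + 1) / 2) * H ^ 2 + (m + 1) * h0 * H - S X H - (N - 1) * X * H
            + (N - 1) * h0 * X)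
      + (-1) * (S X H * ((m - 1) * H - (m - 1) * h0 + σ * X))
      = -(K1 / (2 * (m + 1))) * X
        - ((2 * N - σ - 6) * (2 * N + σ - 2) * (σ + 2) / (16 * m)) * X ^ 3 := by
  intro X H
  have hm0 : m ≠ 0 := by linarith
  have hm1 : m + 1 ≠ 0 := by linarith
  have key : h0 ^ 2 = 2 / (m + 1) := by
    rw [hh0]; exact Real.sq_sqrt (by positivity)
  rw [hS, hK1]
  field_simp
  have key2 : h0 ^ 2 * (m + 1) = 2 := by rw [key]; field_simp
  linear_combination (X * 1048576 * m ^ 4 * (-σ * (1 + 3 * m) + 2 * (1 - m) * (1 - N)) + X * (-1024 * m * N - 512 * m * σ + 1024 * m + 1024 * m ^ 2 * N - 1536 * m ^ 2 * σ - 1024 * m ^ 2 + 2097152 * m ^ 4 * N + 1048576 * m ^ 4 * σ - 2097152 * m ^ 4 - 2097152 * m ^ 5 * N + 3145728 * m ^ 5 * σ + 2097152 * m ^ 5)) * key2
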